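/- Fix 0 < R < 1 and 0 < λ ≤ (1−R) (so that 2λ/(1−R+λ) ≤ 1), and set ρ = (1−R+λ)·H⁻¹(2λ/(1−R+λ)), where H⁻¹ : [0,1] → [0,1/2] is the inverse of the binary entropy function restricted to [0,1/2]. For each n define N_n = C(⌊n(1−R+λ)/2⌋, ⌊ρn/2⌋)² / 2^{⌊λn⌋} and T_n = C(⌊n(1−R+λ)/2⌋, ⌊ρn/2⌋) + N_n. Then lim_{n→∞} (1/n)·log₂ N_n = λ and lim_{n→∞} (1/n)·log₂ T_n = λ; in particular T_n/N_n is subexponential in n, i.e. the fusion algorithm outputs its parity-check equations in amortized time Õ(1). -/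

import Mathlib

open Filter Topology

/-- The binary entropy function `H(x) = −x log₂ x − (1−x) log₂ (1−x)`. -/
noncomputable def binH (x : ℝ) : ℝ :=
  -x * Real.logb 2 x - (1 - x) * Real.logb 2 (1 - x)


noncomputable def gSt (n : ℕ) : ℝ := Real.log n.factorial - ((n : ℝ) * Real.log n - n)

lemma gSt_eq (n : ℕ) (hn : 1 ≤ n) :
    gSt n = Real.log (Stirling.stirlingSeq n) + 1 / 2 * Real.log (2 * n) := by
  have h := Stirling.log_stirlingSeq_formula n
  have hn' : (0:ℝ) < n := by exact_mod_cast hn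
  have : (n:ℝ) * Real.log ((n:ℝ) / Real.exp 1) = (n:ℝ) * Real.log n - n := by
    rw [Real.log_div (ne_of_gt hn') (Real.exp_ne_zero 1), Real.log_exp]; ring
  rw [gSt]; rw [this] at h; linarith

-- log n / n → 0 along ℕ
lemma log_div_nat : Tendsto (fun n : ℕ => Real.log n / n) atTop (𝓝 0) := by
  have h := Real.isLittleO_log_id_atTop.tendsto_div_nhds_zero
  exact h.comp tendsto_natCast_atTop_atTop

lemma floor_ratio (γ : ℝ) (hγ : 0 ≤ γ) :
    Tendsto (fun n : ℕ => (⌊γ * n⌋₊ : ℝ) / n) atTop (𝓝 γ) := by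
  have hlo : Tendsto (fun n : ℕ => γ - 1 / (n:ℝ)) atTop (𝓝 γ) := by
    simpa using tendsto_const_nhds.sub (tendsto_one_div_atTop_nhds_zero_nat (𝕜 := ℝ))
  refine tendsto_of_tendsto_of_tendsto_of_le_of_le' hlo tendsto_const_nhds ?_ ?_
  · filter_upwards [eventually_ge_atTop 1] with n hn
    have hn' : (0:ℝ) < n := by exact_mod_cast hn
    have := Nat.sub_one_lt_floor (γ * n)
    rw [sub_div' (ne_of_gt hn'), div_le_div_iff_of_pos_right hn']
    nlinarith [this]
  · filter_upwards [eventually_ge_atTop 1] with n hn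
    have hn' : (0:ℝ) < n := by exact_mod_cast hn
    have h1 : (⌊γ * n⌋₊ : ℝ) ≤ γ * n := Nat.floor_le (by positivity)
    rw [div_le_iff₀ hn']; linarith

lemma gSt_div (a : ℕ → ℕ) (c : ℝ) (hc : 0 < c)
    (ha : Tendsto a atTop atTop)
    (har : Tendsto (fun n : ℕ => (a n : ℝ) / n) atTop (𝓝 c)) :
    Tendsto (fun n : ℕ => gSt (a n) / n) atTop (𝓝 0) := by
  have hπ : (0:ℝ) < Real.sqrt Real.pi := Real.sqrt_pos.mpr Real.pi_pos
  have hst : Tendsto (fun n : ℕ => Real.log (Stirling.stirlingSeq (a n))) atTop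
      (𝓝 (Real.log (Real.sqrt Real.pi))) :=
    ((Real.continuousAt_log (ne_of_gt hπ)).tendsto.comp
      (Stirling.tendsto_stirlingSeq_sqrt_pi.comp ha))
  have h1 : Tendsto (fun n : ℕ => Real.log (Stirling.stirlingSeq (a n)) / n) atTop (𝓝 0) :=
    hst.div_atTop tendsto_natCast_atTop_atTop
  have h2 : Tendsto (fun n : ℕ => Real.log (2 * (a n : ℝ)) / n) atTop (𝓝 0) := by
    have hev : ∀ᶠ n : ℕ in atTop,
        Real.log (2 * (a n : ℝ)) / n
          = Real.log (2 * ((a n : ℝ) / n)) / n + Real.log n / n := by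
      filter_upwards [har.eventually (eventually_gt_nhds (show c/2 < c by linarith)),
        eventually_ge_atTop 1] with n h1 h2
      have hn' : (0:ℝ) < n := by exact_mod_cast h2
      have hq : (0:ℝ) < (a n : ℝ) / n := lt_trans (by positivity) h1
      have : 2 * (a n : ℝ) = 2 * ((a n : ℝ) / n) * n := by field_simp
      rw [this, Real.log_mul (by positivity) (ne_of_gt hn'), add_div]
    have hA : Tendsto (fun n : ℕ => Real.log (2 * ((a n : ℝ) / n)) / n) atTop (𝓝 0) := by
      have : Tendsto (fun n : ℕ => Real.log (2 * ((a n : ℝ) / n))) atTop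
          (𝓝 (Real.log (2 * c))) :=
        (Real.continuousAt_log (by positivity)).tendsto.comp
          (tendsto_const_nhds.mul har)
      exact this.div_atTop tendsto_natCast_atTop_atTop
    exact Tendsto.congr' (Filter.EventuallyEq.symm hev) (by simpa using hA.add log_div_nat)
  have hev : ∀ᶠ n : ℕ in atTop, gSt (a n) / n
      = Real.log (Stirling.stirlingSeq (a n)) / n + 1/2 * (Real.log (2 * (a n : ℝ)) / n) := by
    filter_upwards [ha.eventually_ge_atTop 1] with n hn
    rw [gSt_eq _ hn]; push_cast; ring
  exact Tendsto.congr' (Filter.EventuallyEq.symm hev)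
    (by simpa using h1.add ((tendsto_const_nhds (x := (1:ℝ)/2)).mul h2))

lemma nat_ratio_atTop (a : ℕ → ℕ) (c : ℝ) (hc : 0 < c)
    (har : Tendsto (fun n : ℕ => (a n : ℝ) / n) atTop (𝓝 c)) :
    Tendsto a atTop atTop := by
  rw [← tendsto_natCast_atTop_iff (R := ℝ)]
  apply tendsto_atTop_mono' _ _ (Filter.tendsto_atTop_mono' atTop
    (show ∀ᶠ n : ℕ in atTop, c/2 * n ≤ c/2 * n from Eventually.of_forall fun _ => le_refl _)
    (tendsto_natCast_atTop_atTop.const_mul_atTop (by linarith)))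
  filter_upwards [har.eventually (eventually_gt_nhds (show c/2 < c by linarith)),
    eventually_ge_atTop 1] with n h1 h2
  have hn' : (0:ℝ) < n := by exact_mod_cast h2
  rw [lt_div_iff₀ hn'] at h1
  linarith

lemma log_choose_lim (α β : ℝ) (hβ : 0 < β) (hβα : β < α)
    (m k : ℕ → ℕ)
    (hm : Tendsto (fun n : ℕ => (m n : ℝ) / n) atTop (𝓝 α))
    (hk : Tendsto (fun n : ℕ => (k n : ℝ) / n) atTop (𝓝 β)) :
    Tendsto (fun n : ℕ => Real.log ((m n).choose (k n)) / n) atTop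
      (𝓝 (β * Real.log (α / β) + (α - β) * Real.log (α / (α - β)))) := by
  have hα : 0 < α := lt_trans hβ hβα
  -- eventually k n < m n, k n ≥ 1, etc.
  have hd : Tendsto (fun n : ℕ => ((m n : ℝ) - k n) / n) atTop (𝓝 (α - β)) := by
    simpa [sub_div] using hm.sub hk
  have hev : ∀ᶠ n : ℕ in atTop, 1 ≤ k n ∧ k n ≤ m n ∧ 1 ≤ m n - k n ∧ 1 ≤ n := by
    filter_upwards [hk.eventually (eventually_gt_nhds (show β/2 < β by linarith)),
      hd.eventually (eventually_gt_nhds (show (α-β)/2 < α - β by linarith)),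
      eventually_ge_atTop 1] with n h1 h2 h3
    have hn' : (0:ℝ) < n := by exact_mod_cast h3
    rw [lt_div_iff₀ hn'] at h1 h2
    have hk1 : (1:ℝ) ≤ k n := by
      have : (0:ℝ) < k n := by nlinarith
      exact_mod_cast Nat.one_le_iff_ne_zero.mpr (by exact_mod_cast ne_of_gt this)
    have hkm : (k n : ℝ) < m n := by nlinarith
    have hkm' : k n ≤ m n := le_of_lt (by exact_mod_cast hkm)
    refine ⟨by exact_mod_cast hk1, hkm', ?_, h3⟩
    have : k n < m n := by exact_mod_cast hkm
    omega
  -- decomposition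
  have hmT : Tendsto m atTop atTop := nat_ratio_atTop m α hα hm
  have hkT : Tendsto k atTop atTop := nat_ratio_atTop k β hβ hk
  have hdr : Tendsto (fun n : ℕ => ((m n - k n : ℕ) : ℝ) / n) atTop (𝓝 (α - β)) := by
    apply hd.congr'
    filter_upwards [hev] with n ⟨h1, h2, h3, h4⟩
    rw [Nat.cast_sub h2]
  have hdT : Tendsto (fun n => m n - k n) atTop atTop :=
    nat_ratio_atTop _ (α - β) (by linarith) hdr
  have hg1 := gSt_div m α hα hmT hm
  have hg2 := gSt_div k β hβ hkT hk
  have hg3 := gSt_div (fun n => m n - k n) (α - β) (by linarith) hdT hdr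
  -- ratio limits
  have hmk : Tendsto (fun n : ℕ => (m n : ℝ) / k n) atTop (𝓝 (α / β)) := by
    have := hm.div hk (ne_of_gt hβ)
    apply this.congr'
    filter_upwards [hev] with n ⟨h1, h2, h3, h4⟩
    have : (k n : ℝ) ≠ 0 := by positivity
    have hn : ((n:ℝ)) ≠ 0 := by
      have : (0:ℝ) < n := by exact_mod_cast h4
      exact ne_of_gt this
    simp only [Pi.div_apply]
    field_simp
  have hmd : Tendsto (fun n : ℕ => (m n : ℝ) / ((m n : ℝ) - k n)) atTop (𝓝 (α / (α - β))) := by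
    have := hm.div hd (by intro h; linarith [sub_eq_zero.mp h]  )
    · apply this.congr'
      filter_upwards [hev] with n ⟨h1, h2, h3, h4⟩
      have hkm : (k n : ℝ) < m n := by
        have : k n < m n := by omega
        exact_mod_cast this
      have hdm : ((m n:ℝ) - k n) ≠ 0 := by linarith
      have hn : ((n:ℝ)) ≠ 0 := by
        have : (0:ℝ) < n := by exact_mod_cast h4
        exact ne_of_gt this
      simp only [Pi.div_apply]
      field_simp
  -- main eventual identity
  have hkey : ∀ᶠ n : ℕ in atTop,
      Real.log ((m n).choose (k n)) / n
        = (gSt (m n) / n - gSt (k n) / n - gSt (m n - k n) / n)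
          + (((k n : ℝ)/n) * Real.log ((m n : ℝ) / k n)
            + (((m n - k n : ℕ) : ℝ)/n) * Real.log ((m n : ℝ) / ((m n : ℝ) - k n))) := by
    filter_upwards [hev] with n ⟨h1, h2, h3, h4⟩
    have hkm : (k n : ℝ) < (m n : ℝ) := by exact_mod_cast (by omega : k n < m n)
    have hk0 : (0:ℝ) < k n := by exact_mod_cast h1
    have hm0 : (0:ℝ) < m n := lt_trans hk0 hkm
    have hd0 : (0:ℝ) < (m n : ℝ) - k n := by linarith
    have hn0 : (0:ℝ) < n := by exact_mod_cast h4
    have hfac : ((m n).choose (k n) : ℝ) * (k n).factorial * (m n - k n).factorial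
        = (m n).factorial := by exact_mod_cast Nat.choose_mul_factorial_mul_factorial h2
    have hch : (0:ℝ) < ((m n).choose (k n) : ℝ) := by
      exact_mod_cast Nat.choose_pos h2
    have hlog : Real.log ((m n).choose (k n))
        = Real.log (m n).factorial - Real.log (k n).factorial
          - Real.log (m n - k n).factorial := by
      rw [← hfac, Real.log_mul (by positivity) (by positivity),
        Real.log_mul (by positivity) (by positivity)]
      ring
    have hcast : ((m n - k n : ℕ) : ℝ) = (m n : ℝ) - k n := by
      exact Nat.cast_sub h2
    have hlogf : ∀ j : ℕ, Real.log j.factorial = gSt j + ((j:ℝ) * Real.log j - j) := by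
      intro j; simp [gSt]
    rw [hlog, hlogf, hlogf, hlogf, hcast]
    rw [Real.log_div (ne_of_gt hm0) (ne_of_gt hk0),
      Real.log_div (ne_of_gt hm0) (ne_of_gt hd0)]
    have hmsplit : (m n : ℝ) * Real.log (m n)
        = (k n : ℝ) * Real.log (m n) + ((m n : ℝ) - k n) * Real.log (m n) := by ring
    field_simp
    ring
  refine Tendsto.congr' (Filter.EventuallyEq.symm hkey) ?_
  have : Tendsto (fun n : ℕ => (gSt (m n) / n - gSt (k n) / n - gSt (m n - k n) / n)
          + (((k n : ℝ)/n) * Real.log ((m n : ℝ) / k n)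
            + (((m n - k n : ℕ) : ℝ)/n) * Real.log ((m n : ℝ) / ((m n : ℝ) - k n))))
      atTop (𝓝 ((0 - 0 - 0) + (β * Real.log (α/β) + (α - β) * Real.log (α/(α-β))))) := by
    refine Tendsto.add ((hg1.sub hg2).sub hg3) (Tendsto.add ?_ ?_)
    · exact hk.mul ((Real.continuousAt_log (ne_of_gt (div_pos hα hβ))).tendsto.comp hmk)
    · exact hdr.mul ((Real.continuousAt_log (ne_of_gt (div_pos hα (by linarith)))).tendsto.comp hmd)
  simpa using this

theorem dumer_fusion_amortized (R lam x : ℝ) (hR0 : 0 < R) (hR1 : R < 1)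
    (hlam0 : 0 < lam) (hlam : lam ≤ 1 - R)
    (hx : x ∈ Set.Icc (0 : ℝ) (1 / 2))
    (hHx : binH x = 2 * lam / (1 - R + lam)) :
    let ρ : ℝ := (1 - R + lam) * x
    let N : ℕ → ℝ := fun n =>
      ((⌊(n : ℝ) * (1 - R + lam) / 2⌋₊.choose ⌊ρ * n / 2⌋₊ : ℝ)) ^ 2 / 2 ^ ⌊lam * n⌋₊
    let T : ℕ → ℝ := fun n =>
      ((⌊(n : ℝ) * (1 - R + lam) / 2⌋₊.choose ⌊ρ * n / 2⌋₊ : ℝ)) + N n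
    Filter.Tendsto (fun n : ℕ => (1 / (n : ℝ)) * Real.logb 2 (N n))
        Filter.atTop (nhds lam) ∧
    Filter.Tendsto (fun n : ℕ => (1 / (n : ℝ)) * Real.logb 2 (T n))
        Filter.atTop (nhds lam) ∧
    Filter.Tendsto (fun n : ℕ => (1 / (n : ℝ)) * Real.logb 2 (T n / N n))
        Filter.atTop (nhds 0) := by
  intro ρ N T
  obtain ⟨hx0', hx2⟩ := hx
  have hc : (0:ℝ) < 1 - R + lam := by linarith
  have hlog2 : (0:ℝ) < Real.log 2 := Real.log_pos (by norm_num)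
  -- x > 0
  have hx0 : 0 < x := by
    rcases lt_or_eq_of_le hx0' with h | h
    · exact h
    · exfalso
      have : binH x = 0 := by rw [← h]; simp [binH]
      rw [this] at hHx
      have : 0 < 2 * lam / (1 - R + lam) := by positivity
      linarith
  have hx1 : x < 1 := by linarith
  set α : ℝ := (1 - R + lam) / 2 with hα_def
  set β : ℝ := (1 - R + lam) * x / 2 with hβ_def
  have hαpos : 0 < α := by positivity
  have hβpos : 0 < β := by positivity
  have hβα : β < α := by
    rw [hα_def, hβ_def]; nlinarith
  set m : ℕ → ℕ := fun n => ⌊(n : ℝ) * (1 - R + lam) / 2⌋₊ with hm_def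
  set k : ℕ → ℕ := fun n => ⌊ρ * n / 2⌋₊ with hk_def
  have hmr : Tendsto (fun n : ℕ => (m n : ℝ) / n) atTop (𝓝 α) := by
    have h := floor_ratio α hαpos.le
    apply h.congr
    intro n
    have : α * n = (n : ℝ) * (1 - R + lam) / 2 := by rw [hα_def]; ring
    rw [hm_def]; simp only [← this]
  have hkr : Tendsto (fun n : ℕ => (k n : ℝ) / n) atTop (𝓝 β) := by
    have h := floor_ratio β hβpos.le
    apply h.congr
    intro n
    have : β * n = ρ * n / 2 := by rw [hβ_def]; ring
    rw [hk_def]; simp only [← this]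
  have hkm : ∀ n, k n ≤ m n := by
    intro n
    apply Nat.floor_mono
    have h0 : (0:ℝ) ≤ n := Nat.cast_nonneg n
    show (1 - R + lam) * x * n / 2 ≤ (n : ℝ) * (1 - R + lam) / 2
    nlinarith
  have hCpos : ∀ n, (0:ℝ) < ((m n).choose (k n) : ℝ) := fun n => by
    exact_mod_cast Nat.choose_pos (hkm n)
  have hNpos : ∀ n, 0 < N n := fun n => by
    have := hCpos n
    positivity
  have hTpos : ∀ n, 0 < T n := fun n => by
    have h1 := hCpos n; have h2 := hNpos n
    show 0 < _ + N n
    positivity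
  -- exponent of the binomial coefficient
  have hL : β * Real.log (α / β) + (α - β) * Real.log (α / (α - β)) = lam * Real.log 2 := by
    have hlog2' : Real.log 2 ≠ 0 := ne_of_gt hlog2
    have e1 : α / β = x⁻¹ := by rw [hα_def, hβ_def]; field_simp
    have e2 : α - β = α * (1 - x) := by rw [hα_def, hβ_def]; ring
    have e3 : α / (α - β) = (1 - x)⁻¹ := by
      rw [e2, div_mul_eq_div_div, div_self (ne_of_gt hαpos)]; ring
    rw [e1, e3, Real.log_inv, Real.log_inv, e2, hα_def, hβ_def]
    have hb := hHx
    rw [binH, Real.logb, Real.logb] at hb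
    field_simp at hb
    nlinarith [hb, hlog2]
  have hC : Tendsto (fun n : ℕ => Real.log ((m n).choose (k n)) / n) atTop
      (𝓝 (lam * Real.log 2)) := by
    rw [← hL]
    exact log_choose_lim α β hβpos hβα m k hmr hkr
  have hCl : Tendsto (fun n : ℕ => (1 / (n:ℝ)) * Real.logb 2 ((m n).choose (k n))) atTop
      (𝓝 lam) := by
    have h := hC.div_const (Real.log 2)
    rw [mul_div_assoc, div_self (ne_of_gt hlog2), mul_one] at h
    apply h.congr
    intro n
    rw [Real.logb]
    ring
  -- N
  have hfl : Tendsto (fun n : ℕ => (⌊lam * n⌋₊ : ℝ) / n) atTop (𝓝 lam) :=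
    floor_ratio lam hlam0.le
  have hNlog : ∀ n : ℕ, Real.logb 2 (N n)
      = 2 * Real.logb 2 ((m n).choose (k n)) - (⌊lam * n⌋₊ : ℝ) := by
    intro n
    show Real.logb 2 (((m n).choose (k n) : ℝ) ^ 2 / 2 ^ ⌊lam * n⌋₊) = _
    rw [Real.logb_div (pow_ne_zero 2 (ne_of_gt (hCpos n))) (by positivity), Real.logb_pow,
      Real.logb_pow]
    have : Real.logb 2 (2:ℝ) = 1 := Real.logb_self_eq_one (by norm_num)
    rw [this]
    push_cast
    ring
  have hNl : Tendsto (fun n : ℕ => (1 / (n:ℝ)) * Real.logb 2 (N n)) atTop (𝓝 lam) := by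
    have h : Tendsto (fun n : ℕ => 2 * ((1 / (n:ℝ)) * Real.logb 2 ((m n).choose (k n)))
        - (⌊lam * n⌋₊ : ℝ) / n) atTop (𝓝 (2 * lam - lam)) :=
      (tendsto_const_nhds.mul hCl).sub hfl
    have h2 : (2 : ℝ) * lam - lam = lam := by ring
    rw [h2] at h
    apply h.congr
    intro n
    rw [hNlog n]
    ring
  -- T
  have hTl : Tendsto (fun n : ℕ => (1 / (n:ℝ)) * Real.logb 2 (T n)) atTop (𝓝 lam) := by
    have hupper : Tendsto (fun n : ℕ => 1 / (n:ℝ)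
        + max ((1 / (n:ℝ)) * Real.logb 2 ((m n).choose (k n)))
              ((1 / (n:ℝ)) * Real.logb 2 (N n))) atTop (𝓝 lam) := by
      have := tendsto_one_div_atTop_nhds_zero_nat.add (hCl.max hNl)
      simpa using this
    refine tendsto_of_tendsto_of_tendsto_of_le_of_le' hNl hupper ?_ ?_
    · filter_upwards [eventually_ge_atTop 1] with n hn
      have hn' : (0:ℝ) < n := by exact_mod_cast hn
      have hle : N n ≤ T n := by
        show N n ≤ _ + N n
        have := hCpos n
        linarith
      have := Real.logb_le_logb_of_le (b := 2) (by norm_num) (hNpos n) hle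
      have h1n : (0:ℝ) ≤ 1 / n := by positivity
      exact mul_le_mul_of_nonneg_left this h1n
    · filter_upwards [eventually_ge_atTop 1] with n hn
      have hn' : (0:ℝ) < n := by exact_mod_cast hn
      have h1n : (0:ℝ) ≤ 1 / n := by positivity
      set Cn := ((m n).choose (k n) : ℝ)
      have hCp := hCpos n
      have hNp := hNpos n
      have hmaxpos : 0 < max Cn (N n) := lt_of_lt_of_le hCp (le_max_left _ _)
      have hTle : T n ≤ 2 * max Cn (N n) := by
        show Cn + N n ≤ _
        have := le_max_left Cn (N n)
        have := le_max_right Cn (N n)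
        linarith
      have hlb : Real.logb 2 (T n) ≤ Real.logb 2 (2 * max Cn (N n)) :=
        Real.logb_le_logb_of_le (by norm_num) (hTpos n) hTle
      have hsplit : Real.logb 2 (2 * max Cn (N n))
          = 1 + max (Real.logb 2 Cn) (Real.logb 2 (N n)) := by
        rw [Real.logb_mul (by norm_num) (ne_of_gt hmaxpos),
          Real.logb_self_eq_one (by norm_num)]
        congr 1
        rcases le_total Cn (N n) with h | h
        · rw [max_eq_right h, max_eq_right (Real.logb_le_logb_of_le (by norm_num) hCp h)]
        · rw [max_eq_left h, max_eq_left (Real.logb_le_logb_of_le (by norm_num) hNp h)]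
      calc (1 / (n:ℝ)) * Real.logb 2 (T n)
          ≤ (1 / (n:ℝ)) * (1 + max (Real.logb 2 Cn) (Real.logb 2 (N n))) := by
            apply mul_le_mul_of_nonneg_left _ h1n
            rw [← hsplit]; exact hlb
        _ = 1 / (n:ℝ) + max ((1 / (n:ℝ)) * Real.logb 2 Cn)
              ((1 / (n:ℝ)) * Real.logb 2 (N n)) := by
            rw [mul_add, mul_one, mul_max_of_nonneg _ _ h1n]
  refine ⟨hNl, hTl, ?_⟩
  have h := hTl.sub hNl
  rw [sub_self] at h
  apply h.congr
  intro n
  rw [Real.logb_div (ne_of_gt (hTpos n)) (ne_of_gt (hNpos n))]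
  ring
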